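/- If a bounded convex curve γ in the plane is the closure of the union of an increasing family of strictly convex polygonal chains γ_n whose edge lengths tend to 0, and γ contains a straight line segment l, then infinitely many vertices of the chains γ_n lie on l — contradicting strict convexity of each γ_n. Hence such a limit curve γ contains no straight line segment. -/

import Mathlib

open Filter

/-- The polygonal chain with vertices `v 0, v 1, ..., v m`, as a subset of the plane. -/
def chainSet (v : ℕ → ℝ × ℝ) (m : ℕ) : Set (ℝ × ℝ) :=
  ⋃ i ∈ Finset.range m, segment ℝ (v i) (v (i + 1))


lemma finrank_plane : Module.finrank ℝ (ℝ × ℝ) = 2 := by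
  simp [Module.finrank_prod]

lemma level_collinear (f : (ℝ × ℝ) →L[ℝ] ℝ) (u : ℝ × ℝ) (hu : f u ≠ 0) (c : ℝ) :
    Collinear ℝ {q : ℝ × ℝ | f q = c} := by
  rw [collinear_iff_finrank_le_one]
  have hsub : vectorSpan ℝ {q : ℝ × ℝ | f q = c} ≤ LinearMap.ker (f : (ℝ × ℝ) →ₗ[ℝ] ℝ) := by
    rw [vectorSpan_def]
    apply Submodule.span_le.2
    rintro w ⟨a, ha, b, hb, rfl⟩
    simp only [Set.mem_setOf_eq] at ha hb
    simp [LinearMap.mem_ker, vsub_eq_sub, map_sub, ha, hb]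
  have hsurj : LinearMap.range (f : (ℝ × ℝ) →ₗ[ℝ] ℝ) = ⊤ := by
    rw [LinearMap.range_eq_top]
    intro r
    refine ⟨(r / f u) • u, ?_⟩
    simp only [LinearMap.map_smul, smul_eq_mul, ContinuousLinearMap.coe_coe]
    field_simp
  have hk : Module.finrank ℝ (LinearMap.ker (f : (ℝ × ℝ) →ₗ[ℝ] ℝ)) = 1 := by
    have h := LinearMap.finrank_range_add_finrank_ker (f : (ℝ × ℝ) →ₗ[ℝ] ℝ)
    rw [hsurj, finrank_top, Module.finrank_self, finrank_plane] at h
    omega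
  calc Module.finrank ℝ (vectorSpan ℝ {q : ℝ × ℝ | f q = c})
      ≤ Module.finrank ℝ (LinearMap.ker (f : (ℝ × ℝ) →ₗ[ℝ] ℝ)) := Submodule.finrank_mono hsub
    _ = 1 := hk

lemma seg_dist {a b q : ℝ × ℝ} (h : q ∈ segment ℝ a b) :
    dist a q ≤ dist a b ∧ dist b q ≤ dist a b := by
  have := dist_add_dist_of_mem_segment h
  constructor
  · linarith [dist_nonneg (x := q) (y := b)]
  · rw [dist_comm b q]; linarith [dist_nonneg (x := a) (y := q)]

theorem stmt_19
    (γ : Set (ℝ × ℝ)) (K : Set (ℝ × ℝ))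
    (hK : Convex ℝ K) (hKc : IsCompact K) (hγK : γ = frontier K)
    (v : ℕ → ℕ → ℝ × ℝ) (m : ℕ → ℕ)
    -- each chain is strictly convex: no three consecutive vertices are collinear
    (hstrict : ∀ n i, i + 2 ≤ m n →
      ¬ Collinear ℝ ({v n i, v n (i + 1), v n (i + 2)} : Set (ℝ × ℝ)))
    -- increasing family: every vertex of γ_n lies on the chain γ_{n+1}
    (hincr : ∀ n i, i ≤ m n → v n i ∈ chainSet (v (n + 1)) (m (n + 1)))
    -- the maximal edge length of γ_n tends to 0
    (hedge : ∀ ε : ℝ, 0 < ε → ∃ N, ∀ n, N ≤ n → ∀ i, i < m n →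
      dist (v n i) (v n (i + 1)) < ε)
    -- the chains converge to γ in Hausdorff distance
    (hconv : Tendsto (fun n => Metric.hausdorffDist (chainSet (v n) (m n)) γ)
      atTop (nhds 0))
    -- γ is the closure of the union of the chains
    (hγ : γ = closure (⋃ n, chainSet (v n) (m n))) :
    ∀ x y : ℝ × ℝ, x ≠ y → ¬ segment ℝ x y ⊆ γ := by
  intro x y hxy hseg
  have hKcl : IsClosed K := hKc.isClosed
  have hKK : frontier K ⊆ K := hKcl.frontier_subset
  set z := midpoint ℝ x y with hz
  have hzγ : z ∈ γ := hseg (midpoint_mem_segment x y)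
  have hxγ : x ∈ γ := hseg (left_mem_segment ℝ x y)
  have hyγ : y ∈ γ := hseg (right_mem_segment ℝ x y)
  have hzK : z ∈ K := hKK (hγK ▸ hzγ)
  have hxK : x ∈ K := hKK (hγK ▸ hxγ)
  have hyK : y ∈ K := hKK (hγK ▸ hyγ)
  have hdzx : dist z x = dist x y / 2 := by
    rw [hz, dist_midpoint_left, Real.norm_ofNat]
    ring
  have hzx0 : 0 < dist z x := by
    rw [hdzx]
    have := dist_pos.2 hxy
    linarith
  have hchain : ∀ n, chainSet (v n) (m n) ⊆ γ := by
    intro n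
    calc chainSet (v n) (m n) ⊆ ⋃ k, chainSet (v k) (m k) := Set.subset_iUnion (fun k => chainSet (v k) (m k)) n
      _ ⊆ closure (⋃ k, chainSet (v k) (m k)) := subset_closure
      _ = γ := hγ.symm
  -- Key geometric step
  have key : ∃ r : ℝ, 0 < r ∧ r ≤ dist z x ∧ ∀ S : Set (ℝ × ℝ), S ⊆ frontier K →
      (∀ a ∈ S, dist a z < r) → Collinear ℝ S := by
    by_cases hint : (interior K).Nonempty
    · -- nondegenerate case: supporting line
      obtain ⟨p, hp⟩ := hint
      have hzfr : z ∈ frontier K := hγK ▸ hzγ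
      have hzint : z ∉ interior K := by
        rw [hKcl.frontier_eq] at hzfr; exact hzfr.2
      obtain ⟨f, hf⟩ := geometric_hahn_banach_open_point hK.interior isOpen_interior hzint
      set c := f z with hc
      have hfp : f p < c := hf p hp
      have hle : ∀ q ∈ K, f q ≤ c := by
        intro q hq
        by_contra hqc
        push_neg at hqc
        set d := f q - f p with hd
        have hd0 : 0 < d := by simp only [hd]; linarith
        have h1 : (c - f p) / d < 1 := (div_lt_one hd0).2 (by simp only [hd]; linarith)
        have h0 : 0 < (c - f p) / d := div_pos (by linarith) hd0
        set t := ((c - f p) / d + 1) / 2 with ht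
        have ht0 : 0 < t := by rw [ht]; linarith
        have ht1 : t < 1 := by rw [ht]; linarith
        have htd : c - f p < t * d := by
          rw [← div_lt_iff₀ hd0]
          rw [ht]; linarith
        have hmem : (1 - t) • p + t • q ∈ interior K :=
          hK.openSegment_interior_closure_subset_interior hp (subset_closure hq)
            ⟨1 - t, t, by linarith, ht0, by ring, rfl⟩
        have hlt := hf _ hmem
        rw [map_add, map_smul, map_smul, smul_eq_mul, smul_eq_mul] at hlt
        simp only [hd] at htd
        nlinarith
      have hfx : f x = c := by
        have h1 : f x ≤ c := hle x hxK
        have h2 : f y ≤ c := hle y hyK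
        have h3 : f z = (1 / 2 : ℝ) * (f x + f y) := by
          rw [hz, midpoint_eq_smul_add, invOf_eq_inv, map_smul, map_add, smul_eq_mul]
          norm_num
        linarith
      have hfy : f y = c := by
        have h1 : f x ≤ c := hle x hxK
        have h2 : f y ≤ c := hle y hyK
        have h3 : f z = (1 / 2 : ℝ) * (f x + f y) := by
          rw [hz, midpoint_eq_smul_add, invOf_eq_inv, map_smul, map_add, smul_eq_mul]
          norm_num
        linarith
      -- x, y, p affinely independent
      have hindep : AffineIndependent ℝ ![x, y, p] := by
        rw [affineIndependent_iff_not_collinear_set]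
        intro hcol
        obtain ⟨u, hu⟩ := (collinear_iff_of_mem (show x ∈ ({x, y, p} : Set (ℝ × ℝ)) by simp)).1 hcol
        obtain ⟨ty, hty⟩ := hu y (by simp)
        obtain ⟨tp, htp⟩ := hu p (by simp)
        rw [vadd_eq_add] at hty htp
        have hfu : ty * f u = 0 := by
          have := congrArg f hty
          rw [map_add, map_smul, smul_eq_mul, hfy, hfx] at this
          linarith
        have hty0 : ty ≠ 0 := by
          rintro rfl
          simp at hty
          exact hxy hty.symm
        have hfu0 : f u = 0 := by
          rcases mul_eq_zero.1 hfu with h | h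
          · exact absurd h hty0
          · exact h
        have := congrArg f htp
        rw [map_add, map_smul, smul_eq_mul, hfu0, hfx] at this
        simp at this
        linarith
      have htot : affineSpan ℝ (Set.range ![x, y, p]) = ⊤ := by
        rw [hindep.affineSpan_eq_top_iff_card_eq_finrank_add_one]
        simp [finrank_plane]
      set b : AffineBasis (Fin 3) ℝ (ℝ × ℝ) := ⟨![x, y, p], hindep, htot⟩ with hb
      have hbpt : ∀ i, b i = ![x, y, p] i := fun i => rfl
      -- coordinates of z
      have hwsum : (Finset.univ : Finset (Fin 3)).sum ![(1:ℝ)/2, 1/2, 0] = 1 := by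
        simp [Fin.sum_univ_three]; norm_num
      have hb0 : b 0 = x := rfl
      have hb1 : b 1 = y := rfl
      have hb2 : b 2 = p := rfl
      have hzcomb : z = (Finset.univ : Finset (Fin 3)).affineCombination ℝ (⇑b) ![(1:ℝ)/2, 1/2, 0] := by
        rw [Finset.univ.affineCombination_eq_linear_combination _ _ hwsum]
        rw [hz, midpoint_eq_smul_add, invOf_eq_inv]
        rw [Fin.sum_univ_three, hb0, hb1, hb2]
        norm_num [smul_add]
        exact Or.inl rfl
      have hc0z : b.coord 0 z = 1 / 2 := by
        rw [hzcomb, b.coord_apply_combination_of_mem (Finset.mem_univ 0) hwsum]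
        rfl
      have hc1z : b.coord 1 z = 1 / 2 := by
        rw [hzcomb, b.coord_apply_combination_of_mem (Finset.mem_univ 1) hwsum]
        rfl
      -- the formula for f in terms of coord 2
      have hfq : ∀ q : ℝ × ℝ, f q = c - (c - f p) * b.coord 2 q := by
        intro q
        have h1 := b.affineCombination_coord_eq_self q
        have hw : (Finset.univ : Finset (Fin 3)).sum (fun i => b.coord i q) = 1 :=
          b.sum_coord_apply_eq_one q
        rw [Finset.univ.affineCombination_eq_linear_combination _ _ hw] at h1
        have h2 : f q = b.coord 0 q * f x + b.coord 1 q * f y + b.coord 2 q * f p := by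
          conv_lhs => rw [← h1]
          rw [Fin.sum_univ_three]
          simp only [map_add, map_smul, smul_eq_mul]
          rfl
        rw [Fin.sum_univ_three] at hw
        rw [hfx, hfy] at h2
        linear_combination h2 + c * hw
      -- open neighbourhood where coords 0, 1 are positive
      have hcont0 : Continuous (b.coord 0) := (b.coord 0).continuous_of_finiteDimensional
      have hcont1 : Continuous (b.coord 1) := (b.coord 1).continuous_of_finiteDimensional
      have hU : IsOpen {q : ℝ × ℝ | 0 < b.coord 0 q ∧ 0 < b.coord 1 q} :=
        (isOpen_lt continuous_const hcont0).inter (isOpen_lt continuous_const hcont1)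
      have hzU : z ∈ {q : ℝ × ℝ | 0 < b.coord 0 q ∧ 0 < b.coord 1 q} := by
        constructor <;> simp [hc0z, hc1z]
      obtain ⟨r₀, hr₀, hball⟩ := Metric.isOpen_iff.1 hU z hzU
      refine ⟨min r₀ (dist z x), lt_min hr₀ hzx0, min_le_right _ _, ?_⟩
      intro S hSfr hSd
      apply (level_collinear f (z - p) (by rw [map_sub]; rw [← hc]; intro h; apply absurd hfp; linarith [sub_eq_zero.1 h]) c).subset
      intro a ha
      have hafr : a ∈ frontier K := hSfr ha
      have had : dist a z < min r₀ (dist z x) := hSd a ha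
      show f a = c
      have hale : f a ≤ c := hle a (hKK hafr)
      by_contra hane
      have halt : f a < c := lt_of_le_of_ne hale hane
      have h2a : 0 < b.coord 2 a := by
        have := hfq a
        by_contra h2a'
        push_neg at h2a'
        nlinarith
      have haU : a ∈ {q : ℝ × ℝ | 0 < b.coord 0 q ∧ 0 < b.coord 1 q} := by
        apply hball
        rw [Metric.mem_ball]
        exact lt_of_lt_of_le had (le_trans (min_le_left _ _) le_rfl)
      have haint : a ∈ interior K := by
        have h3 : a ∈ interior (convexHull ℝ (Set.range ⇑b)) := by
          rw [b.interior_convexHull]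
          intro i
          fin_cases i
          · exact haU.1
          · exact haU.2
          · exact h2a
        apply interior_mono (convexHull_min ?_ hK) h3
        rintro w ⟨i, rfl⟩
        fin_cases i
        · exact hxK
        · exact hyK
        · exact interior_subset hp
      rw [hKcl.frontier_eq] at hafr
      exact hafr.2 haint
    · -- degenerate case: K is contained in a line
      have hKne : K.Nonempty := ⟨z, hzK⟩
      have hKcol : Collinear ℝ K := by
        rw [collinear_iff_finrank_le_one]
        have hsp : ¬ affineSpan ℝ K = ⊤ := by
          rw [← hK.interior_nonempty_iff_affineSpan_eq_top]; exact hint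
        have hvs : vectorSpan ℝ K ≠ ⊤ := fun h =>
          hsp ((AffineSubspace.affineSpan_eq_top_iff_vectorSpan_eq_top_of_nonempty ℝ (ℝ × ℝ) (ℝ × ℝ) hKne).2 h)
        have := Submodule.finrank_lt hvs
        rw [finrank_plane] at this
        omega
      exact ⟨dist z x, hzx0, le_rfl, fun S hS _ => hKcol.subset (hS.trans hKK)⟩
  obtain ⟨r, hr0, hrzx, hcolS⟩ := key
  have h8 : 0 < r / 8 := by linarith
  obtain ⟨N₁, hN₁⟩ := (Metric.tendsto_atTop.1 hconv) (r / 8) h8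
  obtain ⟨N₂, hN₂⟩ := hedge (r / 8) h8
  set M := max N₁ N₂ with hM
  set n := M + 1 with hn
  have hnN₁ : N₁ ≤ n := le_trans (le_max_left _ _) (Nat.le_succ _)
  have hnN₂ : N₂ ≤ n := le_trans (le_max_right _ _) (Nat.le_succ _)
  have hd : Metric.hausdorffDist (chainSet (v n) (m n)) γ < r / 8 := by
    have := hN₁ n hnN₁
    rw [Real.dist_eq, sub_zero] at this
    exact lt_of_le_of_lt (le_abs_self _) this
  have he : ∀ i, i < m n → dist (v n i) (v n (i + 1)) < r / 8 := hN₂ n hnN₂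
  have hcne : (chainSet (v n) (m n)).Nonempty := ⟨v M 0, hincr M 0 (Nat.zero_le _)⟩
  have hγb : Bornology.IsBounded γ := by
    rw [hγK]; exact hKc.isBounded.subset hKK
  have hγne : γ.Nonempty := ⟨z, hzγ⟩
  have hcb : Bornology.IsBounded (chainSet (v n) (m n)) := hγb.subset (hchain n)
  have hfin : EMetric.hausdorffEdist γ (chainSet (v n) (m n)) ≠ ⊤ :=
    Metric.hausdorffEdist_ne_top_of_nonempty_of_bounded hγne hcne hγb hcb
  have hinf : ∀ w ∈ γ, ∃ q ∈ chainSet (v n) (m n), dist w q < r / 7 := by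
    intro w hw
    have h1 : Metric.infDist w (chainSet (v n) (m n)) ≤
        Metric.hausdorffDist γ (chainSet (v n) (m n)) :=
      Metric.infDist_le_hausdorffDist_of_mem hw hfin
    rw [Metric.hausdorffDist_comm] at h1
    exact (Metric.infDist_lt_iff hcne).1 (by linarith)
  obtain ⟨q, hqmem, hqd⟩ := hinf z hzγ
  obtain ⟨i, hi, hqseg⟩ : ∃ i, i < m n ∧ q ∈ segment ℝ (v n i) (v n (i + 1)) := by
    simpa [chainSet] using hqmem
  have hvγ : ∀ j, j ≤ m n → v n j ∈ frontier K := by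
    intro j hj
    rw [← hγK]
    apply hchain n
    rcases Nat.lt_or_ge j (m n) with h | h
    · exact Set.mem_biUnion (Finset.mem_range.2 h) (left_mem_segment ℝ _ _)
    · have hj' : j = (m n - 1) + 1 := by omega
      rw [hj']
      exact Set.mem_biUnion (Finset.mem_range.2 (by omega)) (right_mem_segment ℝ _ _)
  have hdi : dist (v n i) z < r / 8 + r / 7 := by
    have h1 := (seg_dist hqseg).1
    have h2 := he i hi
    calc dist (v n i) z ≤ dist (v n i) q + dist q z := dist_triangle _ _ _
      _ < r / 8 + r / 7 := by rw [dist_comm q z]; linarith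
  have hdi1 : dist (v n (i + 1)) z < r / 8 + r / 7 := by
    have h1 := (seg_dist hqseg).2
    have h2 := he i hi
    calc dist (v n (i + 1)) z ≤ dist (v n (i + 1)) q + dist q z := dist_triangle _ _ _
      _ < r / 8 + r / 7 := by rw [dist_comm q z]; linarith
  rcases Nat.lt_or_ge (m n) 2 with hm | hm
  · -- the chain is a single tiny segment; it cannot approximate both `x` and `z`
    have hi0 : i = 0 := by omega
    obtain ⟨q', hq'mem, hq'd⟩ := hinf x hxγ
    obtain ⟨i', hi', hq'seg⟩ : ∃ i', i' < m n ∧ q' ∈ segment ℝ (v n i') (v n (i' + 1)) := by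
      simpa [chainSet] using hq'mem
    have hi'0 : i' = 0 := by omega
    rw [hi'0] at hq'seg
    have h1 := (seg_dist hq'seg).1
    have h2 := he 0 (by omega)
    rw [hi0] at hdi
    have hlt : dist x z < r := by
      calc dist x z ≤ dist x q' + dist q' (v n 0) + dist (v n 0) z := dist_triangle4 _ _ _ _
        _ < r / 7 + r / 8 + (r / 8 + r / 7) := by rw [dist_comm q' (v n 0)]; linarith
        _ < r := by linarith
    rw [dist_comm] at hlt
    linarith
  · rcases Nat.lt_or_ge (i + 2) (m n + 1) with hc2 | hc2
    · -- use vertices i, i+1, i+2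
      apply hstrict n i (by omega)
      apply hcolS _ ?_ ?_
      · intro a ha
        rcases ha with rfl | rfl | rfl
        · exact hvγ i (by omega)
        · exact hvγ (i + 1) (by omega)
        · exact hvγ (i + 2) (by omega)
      · have h3 := he (i + 1) (by omega)
        intro a ha
        rcases ha with rfl | rfl | rfl
        · linarith
        · linarith
        · calc dist (v n (i + 2)) z ≤ dist (v n (i + 2)) (v n (i + 1)) + dist (v n (i + 1)) z :=
              dist_triangle _ _ _
            _ < r := by rw [dist_comm]; linarith
    · -- use vertices i-1, i, i+1
      have hi1 : 1 ≤ i := by omega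
      have hj1 : i - 1 + 1 = i := by omega
      have hj2 : i - 1 + 2 = i + 1 := by omega
      apply hstrict n (i - 1) (by omega)
      rw [hj1, hj2]
      apply hcolS _ ?_ ?_
      · intro a ha
        rcases ha with rfl | rfl | rfl
        · exact hvγ (i - 1) (by omega)
        · exact hvγ i (by omega)
        · exact hvγ (i + 1) (by omega)
      · have h3 : dist (v n (i - 1)) (v n i) < r / 8 := by
          have h4 := he (i - 1) (by omega)
          rwa [hj1] at h4
        intro a ha
        rcases ha with rfl | rfl | rfl
        · calc dist (v n (i - 1)) z ≤ dist (v n (i - 1)) (v n i) + dist (v n i) z :=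
              dist_triangle _ _ _
            _ < r := by linarith
        · linarith
        · linarith
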